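/- arXiv:2011.05869 — 4 statements merged into one kernel-verified Lean document; each statement's English description precedes it below -/
import Mathlib

section
/- For the softmax policy update π_{w_{t+1}}(a|s) = π_{w_t}(a|s) exp(αQ̄(s,a)/(1−γ))/Z_t(s) with Z_t(s) = ∑_a π_{w_t}(a|s) exp(αQ̄(s,a)/(1−γ)), for every state s, log Z_t(s) − (α/(1−γ)) V_{π_{w_t}}(s) + (α/(1−γ)) ∑_a π_{w_t}(a|s)|Q̄(s,a) − Q_{π_{w_t}}(s,a)| ≥ 0. -/
open Finset

/-- For the softmax policy update with log-partition function
`Z_t(s) = ∑_a π_t(a|s) exp(α Q̄(s,a)/(1−γ))`, for every state `s`,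
`log Z_t(s) − (α/(1−γ)) V_{π_t}(s) + (α/(1−γ)) ∑_a π_t(a|s)|Q̄(s,a) − Q_{π_t}(s,a)| ≥ 0`,
where `V_{π_t}(s) = ∑_a π_t(a|s) Q_{π_t}(s,a)`. -/
theorem log_partition_lower_bound
    {S A : Type*} [Fintype S] [Fintype A] [Nonempty A]
    (γ α : ℝ) (hγ : γ ∈ Set.Ioo (0 : ℝ) 1) (hα : 0 < α)
    (π : S → A → ℝ) (hπnonneg : ∀ s a, 0 ≤ π s a) (hπsum : ∀ s, ∑ a, π s a = 1)
    (Qbar Q : S → A → ℝ) (V : S → ℝ)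
    (hV : ∀ s, V s = ∑ a, π s a * Q s a)
    (Z : S → ℝ)
    (hZ : ∀ s, Z s = ∑ a, π s a * Real.exp (α * Qbar s a / (1 - γ))) :
    ∀ s, 0 ≤ Real.log (Z s) - α / (1 - γ) * V s
          + α / (1 - γ) * ∑ a, π s a * |Qbar s a - Q s a| := by
  intro s
  have hγ1 : (0:ℝ) < 1 - γ := by linarith [hγ.2]
  have hc : 0 < α / (1 - γ) := div_pos hα hγ1
  -- Jensen: exp (∑ π x) ≤ ∑ π exp x = Z s
  have hjen : Real.exp (∑ a, π s a • (α * Qbar s a / (1 - γ))) ≤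
      ∑ a, π s a • Real.exp (α * Qbar s a / (1 - γ)) := by
    have := (convexOn_exp.map_sum_le (t := Finset.univ)
      (w := π s) (p := fun a => α * Qbar s a / (1 - γ))
      (fun i _ => hπnonneg s i) (hπsum s) (fun i _ => Set.mem_univ _))
    simpa using this
  have hZeq : Z s = ∑ a, π s a • Real.exp (α * Qbar s a / (1 - γ)) := by
    simp [hZ s, smul_eq_mul]
  have hZpos : 0 < Z s := by
    rw [hZeq]
    exact lt_of_lt_of_le (Real.exp_pos _) hjen
  have hlog : ∑ a, π s a * (α * Qbar s a / (1 - γ)) ≤ Real.log (Z s) := by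
    rw [← Real.log_exp (∑ a, π s a * (α * Qbar s a / (1 - γ)))]
    apply Real.log_le_log (Real.exp_pos _)
    rw [hZeq]
    simpa [smul_eq_mul] using hjen
  have hsum : ∑ a, π s a * (α * Qbar s a / (1 - γ)) =
      α / (1 - γ) * ∑ a, π s a * Qbar s a := by
    rw [Finset.mul_sum]; congr 1; ext a; ring
  -- pointwise: Q ≤ Q̄ + |Q̄ - Q|
  have habs : V s ≤ (∑ a, π s a * Qbar s a) + ∑ a, π s a * |Qbar s a - Q s a| := by
    rw [hV s, ← Finset.sum_add_distrib]
    apply Finset.sum_le_sum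
    intro a _
    rw [← mul_add]
    apply mul_le_mul_of_nonneg_left _ (hπnonneg s a)
    have := neg_abs_le (Qbar s a - Q s a)
    linarith [le_abs_self (Qbar s a - Q s a)]
  have key : α / (1 - γ) * V s ≤
      Real.log (Z s) + α / (1 - γ) * ∑ a, π s a * |Qbar s a - Q s a| := by
    calc α / (1 - γ) * V s
        ≤ α / (1 - γ) * ((∑ a, π s a * Qbar s a) + ∑ a, π s a * |Qbar s a - Q s a|) :=
          mul_le_mul_of_nonneg_left habs hc.le
      _ = α / (1 - γ) * (∑ a, π s a * Qbar s a)
          + α / (1 - γ) * ∑ a, π s a * |Qbar s a - Q s a| := by ring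
      _ ≤ Real.log (Z s) + α / (1 - γ) * ∑ a, π s a * |Qbar s a - Q s a| := by
          rw [← hsum]; linarith [hlog]
  linarith [key]
end

section
/- Let ψ : X → ℝ^d with ‖ψ(x)‖₂ ≤ 1, let μ be a probability distribution on X, and suppose there exists C₀ > 0 such that for every unit vector u ∈ ℝ^d and every τ ≥ 0, P_{x∼μ}(|uᵀψ(x)| ≤ τ) ≤ C₀ τ. Let θ₀ = (θ_{0,1},…,θ_{0,m}) with d₁ ≤ ‖θ_{0,r}‖₂ for all r, and let θ = (θ₁,…,θ_m) with ∑_r ‖θ_r − θ_{0,r}‖₂² ≤ R². Then E_{x∼μ}[(1/m) ∑_{r=1}^m |𝟙(θ_rᵀψ(x) > 0) − 𝟙(θ_{0,r}ᵀψ(x) > 0)|] ≤ C₀R/(d₁√m). -/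
open MeasureTheory RealInnerProductSpace

/-- Under the anti-concentration assumption
`P_{x∼μ}(|uᵀψ(x)| ≤ τ) ≤ C₀ τ` for every unit vector `u` and `τ ≥ 0`, with
`d₁ ≤ ‖θ_{0,r}‖₂` and `∑_r ‖θ_r − θ_{0,r}‖₂² ≤ R²`, the expected fraction of
flipped ReLU activation patterns is bounded:
`E_{x∼μ}[(1/m) ∑_r |𝟙(θ_rᵀψ(x) > 0) − 𝟙(θ_{0,r}ᵀψ(x) > 0)|] ≤ C₀ R/(d₁ √m)`. -/
theorem expected_activation_flip_bound
    {X : Type*} [MeasurableSpace X] (μ : Measure X) [IsProbabilityMeasure μ]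
    {d m : ℕ} (hm : 0 < m)
    (ψ : X → EuclideanSpace ℝ (Fin d)) (hψmeas : Measurable ψ)
    (hψ : ∀ x, ‖ψ x‖ ≤ 1)
    (C₀ : ℝ) (hC₀ : 0 < C₀)
    (hanti : ∀ u : EuclideanSpace ℝ (Fin d), ‖u‖ = 1 → ∀ τ : ℝ, 0 ≤ τ →
      μ {x | |⟪u, ψ x⟫| ≤ τ} ≤ ENNReal.ofReal (C₀ * τ))
    (θ₀ θ : Fin m → EuclideanSpace ℝ (Fin d))
    (d₁ R : ℝ) (hd₁ : 0 < d₁) (hR : 0 ≤ R)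
    (hθ₀ : ∀ r, d₁ ≤ ‖θ₀ r‖)
    (hθ : ∑ r, ‖θ r - θ₀ r‖ ^ 2 ≤ R ^ 2) :
    ∫ x, (1 / (m : ℝ)) * ∑ r, |(if 0 < ⟪θ r, ψ x⟫ then (1 : ℝ) else 0)
        - (if 0 < ⟪θ₀ r, ψ x⟫ then (1 : ℝ) else 0)| ∂μ
      ≤ C₀ * R / (d₁ * Real.sqrt m) := by
  classical
  have hθ₀pos : ∀ r, (0:ℝ) < ‖θ₀ r‖ := fun r => lt_of_lt_of_le hd₁ (hθ₀ r)
  set δ : Fin m → ℝ := fun r => ‖θ r - θ₀ r‖ with hδdef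
  have hδnonneg : ∀ r, 0 ≤ δ r := fun r => norm_nonneg _
  set u : Fin m → EuclideanSpace ℝ (Fin d) := fun r => ‖θ₀ r‖⁻¹ • θ₀ r with hudef
  have hu : ∀ r, ‖u r‖ = 1 := by
    intro r
    rw [hudef]
    simp [norm_smul, abs_of_pos (inv_pos.mpr (hθ₀pos r)),
      inv_mul_cancel₀ (ne_of_gt (hθ₀pos r))]
  set B : Fin m → Set X := fun r => {x | |⟪u r, ψ x⟫| ≤ δ r / ‖θ₀ r‖} with hBdef
  have hBmeas : ∀ r, MeasurableSet (B r) := by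
    intro r
    have h1 : Measurable fun x => ⟪u r, ψ x⟫ :=
      ((innerSL ℝ (u r)).continuous.measurable).comp hψmeas
    exact measurableSet_le h1.abs measurable_const
  -- pointwise bound
  have hpt : ∀ x, (1 / (m : ℝ)) * ∑ r, |(if 0 < ⟪θ r, ψ x⟫ then (1 : ℝ) else 0)
        - (if 0 < ⟪θ₀ r, ψ x⟫ then (1 : ℝ) else 0)|
      ≤ (1 / (m : ℝ)) * ∑ r, (B r).indicator (fun _ => (1:ℝ)) x := by
    intro x
    apply mul_le_mul_of_nonneg_left _ (by positivity)
    apply Finset.sum_le_sum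
    intro r _
    by_cases h1 : 0 < ⟪θ r, ψ x⟫ <;> by_cases h2 : 0 < ⟪θ₀ r, ψ x⟫ <;>
      simp only [h1, h2, if_true, if_false]
    · simp [Set.indicator_apply]; split <;> norm_num
    · -- flip case 1: θ positive, θ₀ nonpositive
      have hkey : |⟪θ₀ r, ψ x⟫| ≤ δ r := by
        have hcs : |⟪θ r - θ₀ r, ψ x⟫| ≤ δ r := by
          calc |⟪θ r - θ₀ r, ψ x⟫| ≤ ‖θ r - θ₀ r‖ * ‖ψ x‖ := abs_real_inner_le_norm _ _
          _ ≤ δ r := by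
            have := hψ x
            nlinarith [norm_nonneg (θ r - θ₀ r)]
        have hsub : ⟪θ r - θ₀ r, ψ x⟫ = ⟪θ r, ψ x⟫ - ⟪θ₀ r, ψ x⟫ := inner_sub_left _ _ _
        rw [hsub] at hcs
        rw [abs_le] at hcs ⊢
        push_neg at h2
        constructor <;> nlinarith
      have hmem : x ∈ B r := by
        rw [hBdef]
        simp only [Set.mem_setOf_eq, hudef]
        rw [real_inner_smul_left, abs_mul, abs_of_pos (inv_pos.mpr (hθ₀pos r))]
        rw [div_eq_inv_mul]
        exact mul_le_mul_of_nonneg_left hkey (le_of_lt (inv_pos.mpr (hθ₀pos r)))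
      simp [Set.indicator_of_mem hmem]
    · -- flip case 2: θ nonpositive, θ₀ positive
      have hkey : |⟪θ₀ r, ψ x⟫| ≤ δ r := by
        have hcs : |⟪θ r - θ₀ r, ψ x⟫| ≤ δ r := by
          calc |⟪θ r - θ₀ r, ψ x⟫| ≤ ‖θ r - θ₀ r‖ * ‖ψ x‖ := abs_real_inner_le_norm _ _
          _ ≤ δ r := by
            have := hψ x
            nlinarith [norm_nonneg (θ r - θ₀ r)]
        have hsub : ⟪θ r - θ₀ r, ψ x⟫ = ⟪θ r, ψ x⟫ - ⟪θ₀ r, ψ x⟫ := inner_sub_left _ _ _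
        rw [hsub] at hcs
        rw [abs_le] at hcs ⊢
        push_neg at h1
        constructor <;> nlinarith
      have hmem : x ∈ B r := by
        rw [hBdef]
        simp only [Set.mem_setOf_eq, hudef]
        rw [real_inner_smul_left, abs_mul, abs_of_pos (inv_pos.mpr (hθ₀pos r))]
        rw [div_eq_inv_mul]
        exact mul_le_mul_of_nonneg_left hkey (le_of_lt (inv_pos.mpr (hθ₀pos r)))
      simp [Set.indicator_of_mem hmem]
    · simp [Set.indicator_apply]; split <;> norm_num
  -- integrability of the dominating function
  have hint : ∀ r : Fin m, Integrable ((B r).indicator (fun _ => (1:ℝ))) μ := by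
    intro r
    exact (integrable_indicator_iff (hBmeas r)).mpr
      (integrableOn_const (measure_ne_top μ _))
  have hgint : Integrable (fun x => (1 / (m : ℝ)) *
      ∑ r, (B r).indicator (fun _ => (1:ℝ)) x) μ :=
    (integrable_finset_sum Finset.univ (fun r _ => hint r)).const_mul _
  have hstep1 : ∫ x, (1 / (m : ℝ)) * ∑ r, |(if 0 < ⟪θ r, ψ x⟫ then (1 : ℝ) else 0)
        - (if 0 < ⟪θ₀ r, ψ x⟫ then (1 : ℝ) else 0)| ∂μ
      ≤ ∫ x, (1 / (m : ℝ)) * ∑ r, (B r).indicator (fun _ => (1:ℝ)) x ∂μ := by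
    apply integral_mono_of_nonneg
    · filter_upwards with x
      positivity
    · exact hgint
    · filter_upwards with x using hpt x
  have hstep2 : ∫ x, (1 / (m : ℝ)) * ∑ r, (B r).indicator (fun _ => (1:ℝ)) x ∂μ
      = (1 / (m : ℝ)) * ∑ r, (μ (B r)).toReal := by
    rw [integral_const_mul, integral_finset_sum _ (fun r _ => hint r)]
    congr 1
    apply Finset.sum_congr rfl
    intro r _
    rw [integral_indicator_const (1:ℝ) (hBmeas r)]
    simp [Measure.real]
  -- measure bound
  have hmeasb : ∀ r, (μ (B r)).toReal ≤ C₀ * δ r / d₁ := by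
    intro r
    have hτ : (0:ℝ) ≤ δ r / ‖θ₀ r‖ := div_nonneg (hδnonneg r) (le_of_lt (hθ₀pos r))
    have h1 := hanti (u r) (hu r) _ hτ
    have h2 : (μ (B r)).toReal ≤ C₀ * (δ r / ‖θ₀ r‖) := by
      have := ENNReal.toReal_mono (by simp) h1
      rwa [ENNReal.toReal_ofReal (by positivity)] at this
    calc (μ (B r)).toReal ≤ C₀ * (δ r / ‖θ₀ r‖) := h2
      _ ≤ C₀ * δ r / d₁ := by
        rw [mul_div_assoc]
        apply mul_le_mul_of_nonneg_left _ (le_of_lt hC₀)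
        apply div_le_div_of_nonneg_left (hδnonneg r) hd₁ (hθ₀ r)
  -- Cauchy-Schwarz
  have hCS : ∑ r, δ r ≤ Real.sqrt m * R := by
    have h1 : (∑ r, δ r) ^ 2 ≤ (m : ℝ) * R ^ 2 := by
      have h0 := sq_sum_le_card_mul_sum_sq (s := (Finset.univ : Finset (Fin m))) (f := δ)
      simp only [Finset.card_univ, Fintype.card_fin] at h0
      calc (∑ r, δ r) ^ 2 ≤ (m:ℝ) * ∑ r, δ r ^ 2 := h0
        _ ≤ (m : ℝ) * R ^ 2 := by
          apply mul_le_mul_of_nonneg_left _ (Nat.cast_nonneg m)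
          exact hθ
    have h2 : ∑ r, δ r = Real.sqrt ((∑ r, δ r) ^ 2) :=
      (Real.sqrt_sq (Finset.sum_nonneg fun r _ => hδnonneg r)).symm
    rw [h2]
    calc Real.sqrt ((∑ r, δ r) ^ 2) ≤ Real.sqrt ((m : ℝ) * R ^ 2) :=
        Real.sqrt_le_sqrt h1
      _ = Real.sqrt m * R := by
        rw [Real.sqrt_mul (Nat.cast_nonneg m), Real.sqrt_sq hR]
  have hmpos : (0:ℝ) < m := Nat.cast_pos.mpr hm
  have hsm : (0:ℝ) < Real.sqrt m := Real.sqrt_pos.mpr hmpos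
  calc ∫ x, (1 / (m : ℝ)) * ∑ r, |(if 0 < ⟪θ r, ψ x⟫ then (1 : ℝ) else 0)
        - (if 0 < ⟪θ₀ r, ψ x⟫ then (1 : ℝ) else 0)| ∂μ
      ≤ (1 / (m : ℝ)) * ∑ r, (μ (B r)).toReal := hstep1.trans (le_of_eq hstep2)
    _ ≤ (1 / (m : ℝ)) * ∑ r, C₀ * δ r / d₁ := by
        apply mul_le_mul_of_nonneg_left _ (by positivity)
        exact Finset.sum_le_sum fun r _ => hmeasb r
    _ = (1 / (m : ℝ)) * (C₀ / d₁ * ∑ r, δ r) := by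
        simp only [Finset.mul_sum]
        apply Finset.sum_congr rfl
        intro r _
        ring
    _ ≤ (1 / (m : ℝ)) * (C₀ / d₁ * (Real.sqrt m * R)) := by
        apply mul_le_mul_of_nonneg_left _ (by positivity)
        exact mul_le_mul_of_nonneg_left hCS (by positivity)
    _ = C₀ * R / (d₁ * Real.sqrt m) := by
        have : Real.sqrt m * Real.sqrt m = (m:ℝ) := Real.mul_self_sqrt (le_of_lt hmpos)
        field_simp
        linear_combination R * this
end

section
/- Under the same setting, defining the two-layer ReLU network f(x;θ) = (1/√m) ∑_{r=1}^m b_r·ReLU(θ_rᵀψ(x)) with |b_r| ≤ 1 and its linearization f₀(x;θ) = (1/√m) ∑_{r=1}^m b_r 𝟙(θ_{0,r}ᵀψ(x) > 0) θ_rᵀψ(x), if ∑_r ‖θ_r − θ_{0,r}‖₂² ≤ R² and d₁ ≤ ‖θ_{0,r}‖₂ for all r, then E_{x∼μ}[|f(x;θ) − f₀(x;θ)|²] ≤ 4C₀R³/(d₁√m). -/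
open MeasureTheory RealInnerProductSpace

/-- For the two-layer ReLU network
`f(x;θ) = (1/√m) ∑_r b_r · ReLU(θ_rᵀψ(x))` with `|b_r| ≤ 1` and its
linearization `f₀(x;θ) = (1/√m) ∑_r b_r 𝟙(θ_{0,r}ᵀψ(x) > 0) θ_rᵀψ(x)`, under
the anti-concentration assumption on the feature distribution, if
`∑_r ‖θ_r − θ_{0,r}‖₂² ≤ R²` and `d₁ ≤ ‖θ_{0,r}‖₂` for all `r`, then
`E_{x∼μ}[|f(x;θ) − f₀(x;θ)|²] ≤ 4 C₀ R³/(d₁ √m)`. -/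
theorem network_linearization_error_bound
    {X : Type*} [MeasurableSpace X] (μ : Measure X) [IsProbabilityMeasure μ]
    {d m : ℕ} (hm : 0 < m)
    (ψ : X → EuclideanSpace ℝ (Fin d)) (hψmeas : Measurable ψ)
    (hψ : ∀ x, ‖ψ x‖ ≤ 1)
    (C₀ : ℝ) (hC₀ : 0 < C₀)
    (hanti : ∀ u : EuclideanSpace ℝ (Fin d), ‖u‖ = 1 → ∀ τ : ℝ, 0 ≤ τ →
      μ {x | |⟪u, ψ x⟫| ≤ τ} ≤ ENNReal.ofReal (C₀ * τ))
    (θ₀ θ : Fin m → EuclideanSpace ℝ (Fin d)) (b : Fin m → ℝ)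
    (hb : ∀ r, |b r| ≤ 1)
    (d₁ R : ℝ) (hd₁ : 0 < d₁) (hR : 0 ≤ R)
    (hθ₀ : ∀ r, d₁ ≤ ‖θ₀ r‖)
    (hθ : ∑ r, ‖θ r - θ₀ r‖ ^ 2 ≤ R ^ 2)
    (f f₀ : X → ℝ)
    (hf : ∀ x, f x = (1 / Real.sqrt m) * ∑ r, b r * max (⟪θ r, ψ x⟫) 0)
    (hf₀ : ∀ x, f₀ x = (1 / Real.sqrt m) * ∑ r, b r *
        ((if 0 < ⟪θ₀ r, ψ x⟫ then (1 : ℝ) else 0) * ⟪θ r, ψ x⟫)) :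
    ∫ x, |f x - f₀ x| ^ 2 ∂μ ≤ 4 * C₀ * R ^ 3 / (d₁ * Real.sqrt m) := by
  have hsm : 0 < Real.sqrt m := Real.sqrt_pos.mpr (by exact_mod_cast hm)
  set Δ : Fin m → ℝ := fun r => ‖θ r - θ₀ r‖ with hΔdef
  have hΔ0 : ∀ r, 0 ≤ Δ r := fun r => norm_nonneg _
  set S : Fin m → Set X := fun r => {x | |⟪θ₀ r, ψ x⟫| ≤ Δ r} with hSdef
  have hSmeas : ∀ r, MeasurableSet (S r) := by
    intro r
    have : Measurable fun x => |⟪θ₀ r, ψ x⟫| :=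
      (Measurable.inner measurable_const hψmeas).abs
    exact measurableSet_le this measurable_const
  -- inner product difference bound
  have hinner : ∀ r x, |⟪θ r, ψ x⟫ - ⟪θ₀ r, ψ x⟫| ≤ Δ r := by
    intro r x
    rw [← inner_sub_left]
    calc |⟪θ r - θ₀ r, ψ x⟫| ≤ ‖θ r - θ₀ r‖ * ‖ψ x‖ := abs_real_inner_le_norm _ _
      _ ≤ Δ r * 1 := by
          apply mul_le_mul_of_nonneg_left (hψ x) (norm_nonneg _)
      _ = Δ r := mul_one _
  -- per-neuron pointwise bound
  have key : ∀ r x, |max (⟪θ r, ψ x⟫) 0 -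
      (if 0 < ⟪θ₀ r, ψ x⟫ then (1:ℝ) else 0) * ⟪θ r, ψ x⟫|
      ≤ (S r).indicator (fun _ => Δ r) x := by
    intro r x
    have h1 := hinner r x
    rw [abs_le] at h1
    by_cases hx : x ∈ S r
    · rw [Set.indicator_of_mem hx]
      have h0 : |⟪θ₀ r, ψ x⟫| ≤ Δ r := hx
      rw [abs_le] at h0
      split_ifs with h2
      · rcases le_total (⟪θ r, ψ x⟫) 0 with h3 | h3
        · rw [max_eq_right h3, one_mul, abs_le]; constructor <;> linarith
        · rw [max_eq_left h3, one_mul, abs_le]; constructor <;> linarith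
      · push_neg at h2
        rcases le_total (⟪θ r, ψ x⟫) 0 with h3 | h3
        · rw [max_eq_right h3, zero_mul, abs_le]; constructor <;> linarith
        · rw [max_eq_left h3, zero_mul, abs_le]; constructor <;> linarith
    · rw [Set.indicator_of_notMem hx]
      have h0 : Δ r < |⟪θ₀ r, ψ x⟫| := by
        simp only [hSdef, Set.mem_setOf_eq, not_le] at hx
        exact hx
      rcases lt_or_ge 0 (⟪θ₀ r, ψ x⟫) with h2 | h2
      · have : Δ r < ⟪θ₀ r, ψ x⟫ := by
          rwa [abs_of_pos h2] at h0
        have h3 : 0 < ⟪θ r, ψ x⟫ := by linarith [h1.1]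
        rw [if_pos h2, max_eq_left h3.le, one_mul, sub_self, abs_zero]
      · have : Δ r < -⟪θ₀ r, ψ x⟫ := by
          rwa [abs_of_nonpos h2] at h0
        have h3 : ⟪θ r, ψ x⟫ ≤ 0 := by linarith [h1.2]
        rw [if_neg (not_lt.mpr h2), max_eq_right h3, zero_mul, sub_self, abs_zero]
  -- pointwise squared bound
  have hΔsum : ∀ x, |f x - f₀ x| ^ 2 ≤
      R ^ 2 / m * ∑ r, (S r).indicator (fun _ => (1:ℝ)) x := by
    intro x
    have hstep1 : |f x - f₀ x| ≤
        (1 / Real.sqrt m) * ∑ r, (S r).indicator (fun _ => Δ r) x := by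
      rw [hf x, hf₀ x, ← mul_sub, ← Finset.sum_sub_distrib]
      rw [abs_mul, abs_of_pos (by positivity : (0:ℝ) < 1 / Real.sqrt m)]
      apply mul_le_mul_of_nonneg_left _ (by positivity)
      calc |∑ r, (b r * max (⟪θ r, ψ x⟫) 0 -
              b r * ((if 0 < ⟪θ₀ r, ψ x⟫ then (1:ℝ) else 0) * ⟪θ r, ψ x⟫))|
          ≤ ∑ r, |b r * max (⟪θ r, ψ x⟫) 0 -
              b r * ((if 0 < ⟪θ₀ r, ψ x⟫ then (1:ℝ) else 0) * ⟪θ r, ψ x⟫)| :=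
            Finset.abs_sum_le_sum_abs _ _
        _ ≤ ∑ r, (S r).indicator (fun _ => Δ r) x := by
            apply Finset.sum_le_sum
            intro r _
            rw [← mul_sub, abs_mul]
            calc |b r| * |max (⟪θ r, ψ x⟫) 0 -
                  (if 0 < ⟪θ₀ r, ψ x⟫ then (1:ℝ) else 0) * ⟪θ r, ψ x⟫|
                ≤ 1 * ((S r).indicator (fun _ => Δ r) x) := by
                  apply mul_le_mul (hb r) (key r x) (abs_nonneg _)
                  exact zero_le_one
              _ = _ := one_mul _
    have hnn : (0:ℝ) ≤ ∑ r, (S r).indicator (fun _ => Δ r) x := by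
      apply Finset.sum_nonneg
      intro r _
      exact Set.indicator_nonneg (fun _ _ => hΔ0 r) x
    have hsq : |f x - f₀ x| ^ 2 ≤
        (1 / Real.sqrt m) ^ 2 * (∑ r, (S r).indicator (fun _ => Δ r) x) ^ 2 := by
      rw [← mul_pow]
      apply pow_le_pow_left₀ (abs_nonneg _) hstep1
    have hCS : (∑ r, (S r).indicator (fun _ => Δ r) x) ^ 2 ≤
        R ^ 2 * ∑ r, (S r).indicator (fun _ => (1:ℝ)) x := by
      have : ∀ r, (S r).indicator (fun _ => Δ r) x =
          Δ r * (S r).indicator (fun _ => (1:ℝ)) x := by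
        intro r
        by_cases hx : x ∈ S r
        · rw [Set.indicator_of_mem hx, Set.indicator_of_mem hx, mul_one]
        · rw [Set.indicator_of_notMem hx, Set.indicator_of_notMem hx, mul_zero]
      simp_rw [this]
      calc (∑ r, Δ r * (S r).indicator (fun _ => (1:ℝ)) x) ^ 2
          ≤ (∑ r, (Δ r) ^ 2) * ∑ r, ((S r).indicator (fun _ => (1:ℝ)) x) ^ 2 :=
            Finset.sum_mul_sq_le_sq_mul_sq _ _ _
        _ ≤ R ^ 2 * ∑ r, (S r).indicator (fun _ => (1:ℝ)) x := by
            apply mul_le_mul hθ _ _ (by positivity)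
            · apply Finset.sum_le_sum
              intro r _
              by_cases hx : x ∈ S r
              · rw [Set.indicator_of_mem hx]; norm_num
              · rw [Set.indicator_of_notMem hx]; norm_num
            · apply Finset.sum_nonneg
              intro r _
              positivity
    calc |f x - f₀ x| ^ 2
        ≤ (1 / Real.sqrt m) ^ 2 * (∑ r, (S r).indicator (fun _ => Δ r) x) ^ 2 := hsq
      _ ≤ (1 / Real.sqrt m) ^ 2 * (R ^ 2 * ∑ r, (S r).indicator (fun _ => (1:ℝ)) x) := by
          apply mul_le_mul_of_nonneg_left hCS (by positivity)
      _ = R ^ 2 / m * ∑ r, (S r).indicator (fun _ => (1:ℝ)) x := by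
          rw [div_pow, one_pow, Real.sq_sqrt (Nat.cast_nonneg m)]
          ring
  -- integrability of the majorant
  have hGint : Integrable (fun x => R ^ 2 / m *
      ∑ r, (S r).indicator (fun _ => (1:ℝ)) x) μ := by
    apply Integrable.const_mul
    apply integrable_finset_sum
    intro r _
    exact (integrable_const (1:ℝ)).indicator (hSmeas r)
  -- integral comparison
  have hle : ∫ x, |f x - f₀ x| ^ 2 ∂μ ≤
      ∫ x, R ^ 2 / m * ∑ r, (S r).indicator (fun _ => (1:ℝ)) x ∂μ := by
    apply integral_mono_of_nonneg
    · filter_upwards with x using by positivity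
    · exact hGint
    · filter_upwards with x using hΔsum x
  -- compute/bound the integral of the majorant
  have hmeasure : ∀ r, (μ (S r)).toReal ≤ C₀ * Δ r / d₁ := by
    intro r
    have hn : 0 < ‖θ₀ r‖ := lt_of_lt_of_le hd₁ (hθ₀ r)
    set u : EuclideanSpace ℝ (Fin d) := ‖θ₀ r‖⁻¹ • θ₀ r with hu
    have hunorm : ‖u‖ = 1 := by
      rw [hu, norm_smul, norm_inv, norm_norm, inv_mul_cancel₀ hn.ne']
    have hτ : (0:ℝ) ≤ Δ r / ‖θ₀ r‖ := by positivity
    have hsub : S r ⊆ {x | |⟪u, ψ x⟫| ≤ Δ r / ‖θ₀ r‖} := by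
      intro x hx
      simp only [Set.mem_setOf_eq, hu]
      rw [real_inner_smul_left, abs_mul, abs_inv, abs_norm]
      rw [div_eq_inv_mul]
      exact mul_le_mul_of_nonneg_left hx (by positivity)
    have := le_trans (measure_mono hsub) (hanti u hunorm _ hτ)
    have h2 : (μ (S r)).toReal ≤ C₀ * (Δ r / ‖θ₀ r‖) :=
      ENNReal.toReal_le_of_le_ofReal (by positivity) this
    calc (μ (S r)).toReal ≤ C₀ * (Δ r / ‖θ₀ r‖) := h2
      _ ≤ C₀ * (Δ r / d₁) := by
          apply mul_le_mul_of_nonneg_left _ hC₀.le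
          exact div_le_div_of_nonneg_left (hΔ0 r) hd₁ (hθ₀ r)
      _ = C₀ * Δ r / d₁ := by ring
  have hΔsum' : ∑ r, Δ r ≤ Real.sqrt m * R := by
    have hCS : (∑ r, Δ r) ^ 2 ≤ (m : ℝ) * R ^ 2 := by
      have h1 : (∑ r, (1:ℝ) * Δ r) ^ 2 ≤ (∑ r, (1:ℝ) ^ 2) * ∑ r, (Δ r) ^ 2 :=
        Finset.sum_mul_sq_le_sq_mul_sq _ _ _
      simp only [one_mul, one_pow, Finset.sum_const, Finset.card_univ,
        Fintype.card_fin, nsmul_eq_mul, mul_one] at h1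
      calc (∑ r, Δ r) ^ 2 ≤ (m : ℝ) * ∑ r, (Δ r) ^ 2 := h1
        _ ≤ (m : ℝ) * R ^ 2 := by
            apply mul_le_mul_of_nonneg_left hθ (Nat.cast_nonneg m)
    have h2 : ∑ r, Δ r ≤ Real.sqrt ((m : ℝ) * R ^ 2) := by
      rw [← Real.sqrt_sq (Finset.sum_nonneg fun r _ => hΔ0 r)]
      exact Real.sqrt_le_sqrt hCS
    calc ∑ r, Δ r ≤ Real.sqrt ((m : ℝ) * R ^ 2) := h2
      _ = Real.sqrt m * R := by
          rw [Real.sqrt_mul (Nat.cast_nonneg m), Real.sqrt_sq hR]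
  have hint : ∫ x, R ^ 2 / m * ∑ r, (S r).indicator (fun _ => (1:ℝ)) x ∂μ ≤
      C₀ * R ^ 3 / (d₁ * Real.sqrt m) := by
    rw [integral_const_mul, integral_finset_sum _
      (fun r _ => (integrable_const (1:ℝ)).indicator (hSmeas r))]
    have heq : ∀ r, ∫ x, (S r).indicator (fun _ => (1:ℝ)) x ∂μ = (μ (S r)).toReal := by
      intro r
      rw [integral_indicator_const _ (hSmeas r), smul_eq_mul, mul_one, measureReal_def]
    simp_rw [heq]
    have h3 : ∑ r, (μ (S r)).toReal ≤ C₀ * (Real.sqrt m * R) / d₁ := by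
      calc ∑ r, (μ (S r)).toReal ≤ ∑ r, C₀ * Δ r / d₁ :=
            Finset.sum_le_sum fun r _ => hmeasure r
        _ = C₀ / d₁ * ∑ r, Δ r := by rw [Finset.mul_sum]; congr 1; ext r; ring
        _ ≤ C₀ / d₁ * (Real.sqrt m * R) := by
            apply mul_le_mul_of_nonneg_left hΔsum' (by positivity)
        _ = C₀ * (Real.sqrt m * R) / d₁ := by ring
    calc R ^ 2 / m * ∑ r, (μ (S r)).toReal
        ≤ R ^ 2 / m * (C₀ * (Real.sqrt m * R) / d₁) := by
          apply mul_le_mul_of_nonneg_left h3 (by positivity)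
      _ = C₀ * R ^ 3 / (d₁ * Real.sqrt m) := by
          field_simp
          linear_combination R ^ 3 * Real.sq_sqrt (Nat.cast_nonneg m)
  calc ∫ x, |f x - f₀ x| ^ 2 ∂μ
      ≤ C₀ * R ^ 3 / (d₁ * Real.sqrt m) := le_trans hle hint
    _ ≤ 4 * C₀ * R ^ 3 / (d₁ * Real.sqrt m) := by
        apply div_le_div_of_nonneg_right _ (by positivity)
        nlinarith [hC₀.le, pow_nonneg hR 3]
end

section
/- Consider the tabular softmax NPG update with approximate Q-values: π_{t+1}(a|s) = π_t(a|s)exp(αQ̄_t(s,a)/(1−γ))/Z_t(s). Then for the optimal policy π* and its visitation distribution ν*, (1−γ)·(J(π*) − J(π_t)) ≤ (1/α)E_{s∼ν*}[D_KL(π*(·|s)‖π_t(·|s)) − D_KL(π*(·|s)‖π_{t+1}(·|s))]·(1−γ) + (1−γ)·[ (1/α)E_{s∼ν*}(log Z_t(s) − (α/(1−γ))V_{π_t}(s)) + (1/(1−γ))E_{s∼ν*}∑_a π*(a|s)(Q_{π_t}(s,a) − Q̄_t(s,a)) ]. Equivalently, J(π*) − J(π_t) equals the sum of the KL telescoping term,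 the log-partition term, and the Q-approximation term as derived from the performance difference lemma. -/
open Finset

/-- **Upper bound on the optimality gap for approximate tabular NPG.** For the
tabular softmax NPG update with approximate Q-values,
`π_{t+1}(a|s) = π_t(a|s) exp(α Q̄_t(s,a)/(1−γ)) / Z_t(s)`, for the optimal
policy `π*` with discounted visitation distribution `ν*`:
`(1−γ)(J(π*) − J(π_t))
  ≤ (1−γ)(1/α) E_{s∼ν*}[D_KL(π*‖π_t) − D_KL(π*‖π_{t+1})]
  + (1−γ)[(1/α) E_{s∼ν*}(log Z_t(s) − (α/(1−γ)) V_{π_t}(s))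
      + (1/(1−γ)) E_{s∼ν*} ∑_a π*(a|s)(Q_{π_t}(s,a) − Q̄_t(s,a))]`. -/
theorem npg_optimality_gap_bound
    {S A : Type*} [Fintype S] [Fintype A]
    (γ α cmax : ℝ) (hγ : γ ∈ Set.Ioo (0 : ℝ) 1) (hα : 0 < α) (hcmax : 0 ≤ cmax)
    (P : S → A → S → ℝ) (hPnonneg : ∀ s a s', 0 ≤ P s a s')
    (hPsum : ∀ s a, ∑ s', P s a s' = 1)
    (r : S → A → ℝ) (hr : ∀ s a, r s a ∈ Set.Icc (0 : ℝ) cmax)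
    (ρ : S → ℝ) (hρ : ∀ s, 0 ≤ ρ s) (hρsum : ∑ s, ρ s = 1)
    -- current policy `π_t`, next policy `π_{t+1}`, optimal policy `π*`
    (πt πt1 πstar : S → A → ℝ)
    (hπt : ∀ s a, 0 < πt s a) (hπtsum : ∀ s, ∑ a, πt s a = 1)
    (hπstar : ∀ s a, 0 ≤ πstar s a) (hπstarsum : ∀ s, ∑ a, πstar s a = 1)
    -- value functions of `π_t` and `π*`
    (V Vstar : S → ℝ) (Q Qstar : S → A → ℝ)
    (hQ : ∀ s a, Q s a = r s a + γ * ∑ s', P s a s' * V s')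
    (hV : ∀ s, V s = ∑ a, πt s a * Q s a)
    (hQstar : ∀ s a, Qstar s a = r s a + γ * ∑ s', P s a s' * Vstar s')
    (hVstar : ∀ s, Vstar s = ∑ a, πstar s a * Qstar s a)
    -- approximate Q-values, log-partition function, and the NPG update
    (Qbar : S → A → ℝ) (Z : S → ℝ)
    (hZ : ∀ s, Z s = ∑ a, πt s a * Real.exp (α * Qbar s a / (1 - γ)))
    (hupd : ∀ s a, πt1 s a = πt s a * Real.exp (α * Qbar s a / (1 - γ)) / Z s)
    -- discounted visitation distribution of `π*` started from `ρ`
    (νstar : S → ℝ) (hνnonneg : ∀ s, 0 ≤ νstar s)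
    (hν : ∀ s, νstar s
        = (1 - γ) * ρ s + γ * ∑ s', νstar s' * ∑ a, πstar s' a * P s' a s) :
    (1 - γ) * ((∑ s, ρ s * Vstar s) - (∑ s, ρ s * V s))
      ≤ (1 - γ) * ((1 / α) * ∑ s, νstar s *
            ((∑ a, πstar s a * Real.log (πstar s a / πt s a))
              - (∑ a, πstar s a * Real.log (πstar s a / πt1 s a))))
        + (1 - γ) *
          ((1 / α) * (∑ s, νstar s * (Real.log (Z s) - α / (1 - γ) * V s))
            + (1 / (1 - γ)) *
                ∑ s, νstar s * ∑ a, πstar s a * (Q s a - Qbar s a)) := by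

  obtain ⟨hγ0, hγ1⟩ := hγ
  have h1γ : (0:ℝ) < 1 - γ := by linarith
  apply le_of_eq
  -- positivity of Z
  have hZpos : ∀ s : S, 0 < Z s := by
    intro s
    have hne : (Finset.univ : Finset A).Nonempty := by
      by_contra h
      rw [Finset.not_nonempty_iff_eq_empty] at h
      have h2 := hπtsum s
      rw [h] at h2
      simp at h2
    rw [hZ]
    exact Finset.sum_pos (fun a _ => mul_pos (hπt s a) (Real.exp_pos _)) hne
  -- KL difference identity
  have hKL : ∀ s, (∑ a, πstar s a * Real.log (πstar s a / πt s a))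
      - (∑ a, πstar s a * Real.log (πstar s a / πt1 s a))
      = α / (1 - γ) * (∑ a, πstar s a * Qbar s a) - Real.log (Z s) := by
    intro s
    rw [← Finset.sum_sub_distrib]
    have e : ∀ a ∈ (Finset.univ : Finset A),
        πstar s a * Real.log (πstar s a / πt s a)
          - πstar s a * Real.log (πstar s a / πt1 s a)
        = α / (1 - γ) * (πstar s a * Qbar s a) - πstar s a * Real.log (Z s) := by
      intro a _
      rcases eq_or_lt_of_le (hπstar s a) with h0 | hpos
      · simp [← h0]
      · have hπtp := hπt s a
        have hZp := hZpos s
        have hπt1p : 0 < πt1 s a := by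
          rw [hupd s a]; positivity
        rw [Real.log_div hpos.ne' hπtp.ne', Real.log_div hpos.ne' hπt1p.ne',
          hupd s a, Real.log_div (by positivity) hZp.ne',
          Real.log_mul hπtp.ne' (Real.exp_pos _).ne', Real.log_exp]
        field_simp
        ring
    rw [Finset.sum_congr rfl e, Finset.sum_sub_distrib, ← Finset.mul_sum,
      ← Finset.sum_mul, hπstarsum s, one_mul]
  -- weighted-sum identity from the visitation equation
  have h1 : ∀ f : S → ℝ,
      γ * ∑ s, νstar s * ∑ a, πstar s a * ∑ s', P s a s' * f s'
        = (∑ s, νstar s * f s) - (1 - γ) * ∑ s, ρ s * f s := by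
    intro f
    have swap : ∑ s, (∑ s', νstar s' * ∑ a, πstar s' a * P s' a s) * f s
        = ∑ s', νstar s' * ∑ a, πstar s' a * ∑ s, P s' a s * f s := by
      simp only [Finset.sum_mul, Finset.mul_sum]
      rw [Finset.sum_comm]
      refine Finset.sum_congr rfl fun s' _ => ?_
      rw [Finset.sum_comm]
      exact Finset.sum_congr rfl fun a _ => Finset.sum_congr rfl fun s _ => by ring
    have e : ∑ s, νstar s * f s
        = (1 - γ) * (∑ s, ρ s * f s)
          + γ * ∑ s, (∑ s', νstar s' * ∑ a, πstar s' a * P s' a s) * f s := by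
      calc ∑ s, νstar s * f s
          = ∑ s, ((1 - γ) * ρ s + γ * ∑ s', νstar s' * ∑ a, πstar s' a * P s' a s) * f s :=
            Finset.sum_congr rfl fun s _ => by rw [← hν s]
        _ = _ := by
            simp only [add_mul]
            rw [Finset.sum_add_distrib]
            congr 1
            · rw [Finset.mul_sum]
              exact Finset.sum_congr rfl fun s _ => by ring
            · rw [Finset.mul_sum]
              exact Finset.sum_congr rfl fun s _ => by ring
    rw [e, swap]; ring
  set R : ℝ := ∑ s, νstar s * ∑ a, πstar s a * r s a with hR
  -- Bellman expansions
  have inner : ∀ (W : S → ℝ) (Qw : S → A → ℝ),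
      (∀ s a, Qw s a = r s a + γ * ∑ s', P s a s' * W s') →
      ∀ s, ∑ a, πstar s a * Qw s a
        = (∑ a, πstar s a * r s a) + γ * ∑ a, πstar s a * ∑ s', P s a s' * W s' := by
    intro W Qw hQw s
    simp only [hQw, mul_add, Finset.sum_add_distrib, Finset.mul_sum]
    congr 1
    refine Finset.sum_congr rfl fun a _ => ?_
    exact Finset.sum_congr rfl fun s' _ => by ring
  have hexp : ∀ (W : S → ℝ) (Qw : S → A → ℝ),
      (∀ s a, Qw s a = r s a + γ * ∑ s', P s a s' * W s') →
      ∑ s, νstar s * ∑ a, πstar s a * Qw s a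
        = R + γ * ∑ s, νstar s * ∑ a, πstar s a * ∑ s', P s a s' * W s' := by
    intro W Qw hQw
    rw [hR, Finset.mul_sum, ← Finset.sum_add_distrib]
    refine Finset.sum_congr rfl fun s _ => ?_
    rw [inner W Qw hQw s]
    ring
  -- (1-γ) J(π*) = R
  have hRstar : (1 - γ) * ∑ s, ρ s * Vstar s = R := by
    have e1 : ∑ s, νstar s * Vstar s = ∑ s, νstar s * ∑ a, πstar s a * Qstar s a :=
      Finset.sum_congr rfl fun s _ => by rw [hVstar s]
    have e2 := hexp Vstar Qstar hQstar
    have e3 := h1 Vstar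
    rw [e1, e2] at *
    linarith [e3]
  -- performance difference: LHS = T
  have hT : ∑ s, νstar s * ((∑ a, πstar s a * Q s a) - V s)
      = R - (1 - γ) * ∑ s, ρ s * V s := by
    have hsplit : ∑ s, νstar s * ((∑ a, πstar s a * Q s a) - V s)
        = (∑ s, νstar s * ∑ a, πstar s a * Q s a) - ∑ s, νstar s * V s := by
      simp [mul_sub, Finset.sum_sub_distrib]
    rw [hsplit, hexp V Q hQ]
    have := h1 V
    linarith
  have hLHS : (1 - γ) * ((∑ s, ρ s * Vstar s) - (∑ s, ρ s * V s))
      = ∑ s, νstar s * ((∑ a, πstar s a * Q s a) - V s) := by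
    rw [hT, mul_sub, hRstar]
  rw [hLHS]
  -- RHS equals the same per-state sum
  have hD : ∀ s, ∑ a, πstar s a * (Q s a - Qbar s a)
      = (∑ a, πstar s a * Q s a) - ∑ a, πstar s a * Qbar s a := by
    intro s
    rw [← Finset.sum_sub_distrib]
    exact Finset.sum_congr rfl fun a _ => by ring
  simp only [Finset.mul_sum, mul_add, ← Finset.sum_add_distrib]
  refine Finset.sum_congr rfl fun s _ => ?_
  have hα' : α ≠ 0 := ne_of_gt hα
  have h1γ' : (1 - γ) ≠ 0 := ne_of_gt h1γ
  rw [hKL s]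
  have e2 : (∑ i : A, (1 - γ) * (1 / (1 - γ) * (νstar s * (πstar s i * (Q s i - Qbar s i)))))
      = νstar s * ∑ a, πstar s a * (Q s a - Qbar s a) := by
    rw [Finset.mul_sum]
    refine Finset.sum_congr rfl fun a _ => ?_
    field_simp
  rw [e2, hD s]
  field_simp
  ring
end
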